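/- For a fully connected deterministic MDP with a single reward source r_g > 0 at state s_g and discount factor 0 < γ < 1, the value function at every state s equals V(s) = γ^{δ(s, s_g)} · r_g / (1 − γ^{φ(s_g)}), where δ(s, s_g) is the distance from s to s_g, φ(s_g) is the minimum cycle length at s_g, and V(s) is the supremum over all infinite action sequences starting at s of the discounted return. -/
import Mathlib


/-- The trajectory induced by an infinite action sequence `a` from initial
state `s`: `traj T s a 0 = s` and `traj T s a (t+1) = T (traj T s a t) (a t)`. -/
def traj {S A : Type*} (T : S → A → S) (s : S) (a : ℕ → A) : ℕ → S
  | 0 => s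
  | t + 1 => T (traj T s a t) (a t)

section
variable {S A : Type*} (T : S → A → S)

lemma traj_add (s : S) (a : ℕ → A) (m n : ℕ) :
    traj T s a (m + n) = traj T (traj T s a m) (fun i => a (m + i)) n := by
  induction n with
  | zero => rfl
  | succ n ih => rw [← Nat.add_assoc]; simp only [traj]; rw [ih]

lemma traj_congr (s : S) {a b : ℕ → A} (n : ℕ) (h : ∀ i < n, a i = b i) :
    traj T s a n = traj T s b n := by
  induction n with
  | zero => rfl
  | succ n ih =>
      simp only [traj]
      rw [ih (fun i hi => h i (Nat.lt_succ_of_lt hi)), h n (Nat.lt_succ_self n)]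

lemma traj_foldl (s : S) (a : ℕ → A) (n : ℕ) :
    traj T s a n = (List.ofFn fun i : Fin n => a i).foldl T s := by
  induction n with
  | zero => rfl
  | succ n ih =>
      rw [List.ofFn_succ']
      simp only [traj, List.concat_eq_append, List.foldl_append, List.foldl_cons, List.foldl_nil]
      rw [ih]
      rfl

lemma traj_eq_of_list (d : A) (l : List A) (s : S) (a : ℕ → A) (n : ℕ) (hn : n = l.length)
    (h : ∀ i, i < n → a i = l.getD i d) : traj T s a n = l.foldl T s := by
  subst hn
  rw [traj_foldl]
  congr 1
  apply List.ext_getElem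
  · simp
  · intro i h1 h2
    simp only [List.getElem_ofFn]
    rw [h i (by simpa using h1), List.getD_eq_getElem _ _ h2]

end

/-- For a fully connected deterministic MDP with a single reward source
`r_g > 0` at state `s_g` and discount factor `0 < γ < 1`, the value function
at every state `s` — the supremum over all infinite action sequences of the
discounted return — equals `γ ^ δ(s, s_g) * r_g / (1 - γ ^ φ(s_g))`, where
`δ(s, s_g)` is the distance from `s` to `s_g` and `φ(s_g)` is the minimum
cycle length at `s_g`. -/
theorem single_source_value_function
    {S A : Type*} [Fintype S] [Nonempty S] [Fintype A] [Nonempty A]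
    (T : S → A → S) (R : S → ℝ) (γ : ℝ) (hγ0 : 0 < γ) (hγ1 : γ < 1)
    (hconn : ∀ s s' : S, ∃ l : List A, l.foldl T s = s')
    (s_g : S) (r_g : ℝ) (hr : 0 < r_g)
    (hRg : R s_g = r_g) (hR0 : ∀ s : S, s ≠ s_g → R s = 0)
    (s : S) :
    (⨆ a : ℕ → A, ∑' t : ℕ, γ ^ t * R (traj T s a t))
      = γ ^ sInf {t : ℕ | ∃ l : List A, l.length = t ∧ l.foldl T s = s_g} *
        (r_g /
          (1 - γ ^ sInf {t : ℕ | 1 ≤ t ∧ ∃ l : List A, l.length = t ∧ l.foldl T s_g = s_g})) := by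
  classical
  set δ := sInf {t : ℕ | ∃ l : List A, l.length = t ∧ l.foldl T s = s_g} with hδdef
  set φ := sInf {t : ℕ | 1 ≤ t ∧ ∃ l : List A, l.length = t ∧ l.foldl T s_g = s_g} with hφdef
  -- nonemptiness and membership
  obtain ⟨l₀, hl₀⟩ := hconn s s_g
  have hδmem : δ ∈ {t : ℕ | ∃ l : List A, l.length = t ∧ l.foldl T s = s_g} :=
    Nat.sInf_mem ⟨l₀.length, l₀, rfl, hl₀⟩
  obtain ⟨l₁, hl₁len, hl₁⟩ := hδmem
  have d : A := Classical.arbitrary A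
  obtain ⟨lc, hlc⟩ := hconn (T s_g d) s_g
  have hφmem : φ ∈ {t : ℕ | 1 ≤ t ∧ ∃ l : List A, l.length = t ∧ l.foldl T s_g = s_g} :=
    Nat.sInf_mem ⟨(d :: lc).length, Nat.succ_le_succ (Nat.zero_le _), d :: lc, rfl, by
      simpa using hlc⟩
  obtain ⟨hφ1, l₂, hl₂len, hl₂⟩ := hφmem
  have hφpos : 0 < φ := hφ1
  -- basic positivity
  have hγφ : γ ^ φ < 1 := pow_lt_one₀ hγ0.le hγ1 (Nat.pos_iff_ne_zero.mp hφpos)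
  have hγφ0 : 0 ≤ γ ^ φ := pow_nonneg hγ0.le φ
  have h1γφ : 0 < 1 - γ ^ φ := by linarith
  -- reward facts
  have hRnn : ∀ x : S, 0 ≤ R x := by
    intro x
    by_cases hx : x = s_g
    · rw [hx, hRg]; exact hr.le
    · rw [hR0 x hx]
  have hRle : ∀ x : S, R x ≤ r_g := by
    intro x
    by_cases hx : x = s_g
    · rw [hx, hRg]
    · rw [hR0 x hx]; exact hr.le
  -- summability of returns
  have hgeo : Summable (fun t : ℕ => γ ^ t * r_g) :=
    (summable_geometric_of_lt_one hγ0.le hγ1).mul_right _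
  have hsum : ∀ a : ℕ → A, Summable (fun t => γ ^ t * R (traj T s a t)) := fun a =>
    Summable.of_nonneg_of_le
      (fun t => mul_nonneg (pow_nonneg hγ0.le t) (hRnn _))
      (fun t => mul_le_mul_of_nonneg_left (hRle _) (pow_nonneg hγ0.le t)) hgeo
  -- the target value and the geometric comparison series
  set C : ℝ := γ ^ δ * (r_g / (1 - γ ^ φ)) with hCdef
  set f : ℕ → ℝ := fun k => (γ ^ δ * r_g) * (γ ^ φ) ^ k with hfdef
  have hfval : ∀ k, f k = γ ^ (δ + k * φ) * r_g := by
    intro k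
    simp only [hfdef, pow_add, pow_mul]
    ring
  have hfsum : Summable f := (summable_geometric_of_lt_one hγφ0 hγφ).mul_left _
  have hftsum : ∑' k, f k = C := by
    rw [hfdef, tsum_mul_left, tsum_geometric_of_lt_one hγφ0 hγφ, hCdef]
    field_simp
  -- key arithmetic lemmas about visits
  have hδle : ∀ (a : ℕ → A) (t : ℕ), traj T s a t = s_g → δ ≤ t := by
    intro a t ht
    apply Nat.sInf_le
    exact ⟨List.ofFn fun i : Fin t => a i, by simp, by rw [← traj_foldl]; exact ht⟩
  have hgap : ∀ (a : ℕ → A) (t u : ℕ), traj T s a t = s_g → traj T s a (t + u) = s_g →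
      1 ≤ u → φ ≤ u := by
    intro a t u ht htu hu
    rw [traj_add, ht, traj_foldl] at htu
    exact Nat.sInf_le ⟨hu, _, by simp, htu⟩
  -- upper bound: every return is at most C
  have hupper : ∀ a : ℕ → A, (∑' t : ℕ, γ ^ t * R (traj T s a t)) ≤ C := by
    intro a
    set g : ℕ → ℝ := fun t => γ ^ t * R (traj T s a t) with hgdef
    set V : Set ℕ := {t | traj T s a t = s_g} with hVdef
    have hsupp : Function.support g ⊆ V := by
      intro t ht
      by_contra hxt
      exact ht (by simp [hgdef, hR0 _ hxt])
    rw [← tsum_subtype_eq_of_support_subset hsupp, ← hftsum]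
    refine Summable.tsum_le_tsum_of_inj (fun t : V => (t.1 - δ) / φ) ?_ (fun k _ => ?_) ?_
      ((hsum a).subtype V) hfsum
    · rintro ⟨t, ht⟩ ⟨t', ht'⟩ hdiv
      have key : ∀ u v : ℕ, u ∈ V → v ∈ V → u < v → (u - δ) / φ < (v - δ) / φ := by
        intro u v hu hv huv
        have hδu : δ ≤ u := hδle a u hu
        have hφuv : φ ≤ v - u := by
          apply hgap a u (v - u) hu _ (by omega)
          rw [Nat.add_sub_cancel' huv.le]
          exact hv
        have : (u - δ) + φ ≤ v - δ := by omega
        calc (u - δ) / φ < (u - δ) / φ + 1 := Nat.lt_succ_self _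
          _ = ((u - δ) + φ) / φ := (Nat.add_div_right _ hφpos).symm
          _ ≤ (v - δ) / φ := Nat.div_le_div_right this
      simp only [Subtype.mk.injEq]
      rcases lt_trichotomy t t' with h | h | h
      · exact absurd hdiv (Nat.ne_of_lt (key t t' ht ht' h))
      · exact h
      · exact absurd hdiv.symm (Nat.ne_of_lt (key t' t ht' ht h))
    · exact mul_nonneg (mul_nonneg (pow_nonneg hγ0.le _) hr.le) (pow_nonneg hγφ0 _)
    · rintro ⟨t, ht⟩
      have hδt : δ ≤ t := hδle a t ht
      have hexp : δ + ((t - δ) / φ) * φ ≤ t := by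
        have := Nat.div_mul_le_self (t - δ) φ
        omega
      calc g t = γ ^ t * r_g := by rw [hgdef]; simp only []; rw [ht, hRg]
        _ ≤ γ ^ (δ + ((t - δ) / φ) * φ) * r_g :=
            mul_le_mul_of_nonneg_right
              (pow_le_pow_of_le_one hγ0.le hγ1.le hexp) hr.le
        _ = f ((t - δ) / φ) := (hfval _).symm
  -- the optimal action sequence
  set a₀ : ℕ → A := fun t => if t < δ then l₁.getD t d else l₂.getD ((t - δ) % φ) d with ha₀def
  have hvisit : ∀ k : ℕ, traj T s a₀ (δ + k * φ) = s_g := by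
    intro k
    induction k with
    | zero =>
        simp only [Nat.zero_mul, Nat.add_zero]
        rw [← hl₁, traj_eq_of_list T d l₁ s a₀ δ hl₁len.symm]
        intro i hi
        simp [ha₀def, hi]
    | succ k ih =>
        have heq : δ + (k + 1) * φ = (δ + k * φ) + φ := by ring
        rw [heq, traj_add, ih]
        have key : traj T s_g (fun i => a₀ (δ + k * φ + i)) φ = l₂.foldl T s_g := by
          apply traj_eq_of_list T d l₂ s_g _ φ hl₂len.symm
          intro i hi
          have h1 : ¬ (δ + k * φ + i < δ) := by omega
          simp only [ha₀def, h1, if_false]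
          congr 1
          have h2 : δ + k * φ + i - δ = i + k * φ := by omega
          rw [h2, Nat.add_mul_mod_self_right, Nat.mod_eq_of_lt hi]
        exact key.trans hl₂
  have hlower : C ≤ ∑' t : ℕ, γ ^ t * R (traj T s a₀ t) := by
    rw [← hftsum]
    refine Summable.tsum_le_tsum_of_inj (fun k => δ + k * φ) ?_ (fun c _ => ?_) (fun k => ?_)
      hfsum (hsum a₀)
    · intro k k' h
      have h3 : δ + k * φ = δ + k' * φ := h
      have h2 : k * φ = k' * φ := by omega
      exact Nat.eq_of_mul_eq_mul_right hφpos h2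
    · exact mul_nonneg (pow_nonneg hγ0.le _) (hRnn _)
    · rw [hfval, hvisit k, hRg]
  -- conclude
  have hbdd : BddAbove (Set.range fun a : ℕ → A => ∑' t : ℕ, γ ^ t * R (traj T s a t)) := by
    refine ⟨C, ?_⟩
    rintro x ⟨a, rfl⟩
    exact hupper a
  apply le_antisymm
  · exact ciSup_le hupper
  · exact le_ciSup_of_le hbdd a₀ hlower
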